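/- Let v₁,…,v_{N+1} be an obtuse system in ℂ^N, i.e. ⟨vᵢ, vⱼ⟩ = −1 for all i ≠ j, and set pᵢ = 1/(1 + ‖vᵢ‖²). Then Σᵢ pᵢ = 1. -/

import Mathlib

/-- for an obtuse system `v₁,…,v_{N+1}` in `ℂ^N`, the associated
probabilities `pᵢ = 1/(1+‖vᵢ‖²)` sum to 1. -/
theorem stmt8 {N : ℕ} (v : Fin (N + 1) → EuclideanSpace ℂ (Fin N))
    (hv : ∀ i j, i ≠ j → (inner ℂ (v i) (v j) : ℂ) = -1) :
    ∑ i, (1 / (1 + ‖v i‖ ^ 2) : ℝ) = 1 := by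
  have hne : ∀ i, (1 + (‖v i‖ : ℂ) ^ 2) ≠ 0 := by
    intro i
    have h1 : (0:ℝ) < 1 + ‖v i‖ ^ 2 := by positivity
    have h2 : ((1 + ‖v i‖ ^ 2 : ℝ) : ℂ) ≠ 0 := by exact_mod_cast h1.ne'
    simpa using h2
  have hdep : ¬ LinearIndependent ℂ v := by
    intro h
    have hle := h.fintype_card_le_finrank
    simp [finrank_euclideanSpace_fin] at hle
  obtain ⟨g, hg, i₀, hi₀⟩ := Fintype.not_linearIndependent_iff.mp hdep
  set c : Fin (N+1) → ℂ := fun i => (starRingEnd ℂ) (g i) with hc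
  set S : ℂ := ∑ i, c i with hS
  have key : ∀ j, c j * (1 + (‖v j‖:ℂ)^2) = S := by
    intro j
    have h0 : (inner ℂ (∑ i, g i • v i) (v j) : ℂ) = 0 := by rw [hg]; simp
    rw [sum_inner] at h0
    simp only [inner_smul_left] at h0
    have h1 : ∑ i, ((starRingEnd ℂ) (g i) * inner ℂ (v i) (v j) + c i)
        = c j * (1 + (‖v j‖:ℂ)^2) := by
      rw [Finset.sum_eq_single j]
      · rw [inner_self_eq_norm_sq_to_K]; simp [hc]; ring
      · intro i _ hij
        rw [hv i j hij]; simp [hc]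
      · simp
    rw [Finset.sum_add_distrib, h0, zero_add] at h1
    rw [← h1, hS]
  have hSne : S ≠ 0 := by
    intro h0
    have hcz : c i₀ = 0 := by
      have hk := key i₀; rw [h0] at hk
      exact (mul_eq_zero.mp hk).resolve_right (hne i₀)
    exact hi₀ (by simpa [hc, map_eq_zero] using hcz)
  have hsum : S * ∑ i, (1 + (‖v i‖:ℂ)^2)⁻¹ = S := by
    rw [Finset.mul_sum]
    calc ∑ i, S * (1 + (‖v i‖:ℂ)^2)⁻¹ = ∑ i, c i := by
          refine Finset.sum_congr rfl fun i _ => ?_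
          rw [← key i, mul_assoc, mul_inv_cancel₀ (hne i), mul_one]
      _ = S := hS.symm
  have hfin : ∑ i, (1 + (‖v i‖:ℂ)^2)⁻¹ = 1 := by
    exact mul_left_cancel₀ hSne (by rw [hsum, mul_one])
  have hcast : ∑ i, ((1 / (1 + ‖v i‖ ^ 2) : ℝ) : ℂ) = 1 := by
    rw [← hfin]
    refine Finset.sum_congr rfl fun i _ => ?_
    push_cast
    rw [one_div]
  exact_mod_cast hcast
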